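/- For all vectors v₁, v₂, v₃ ∈ ℂ³ the following identity holds: |Φ(v₁,v₂,v₃)|² + Σ_{j=1}^{3} |(dz_j ∧ ω)(v₁,v₂,v₃)|² = det G, where G is the 3×3 real Gram matrix with entries G_{ik} = Re⟨v_i, v_k⟩. -/

import Mathlib

open scoped BigOperators

/-- The complex volume form `Φ = dz₁ ∧ dz₂ ∧ dz₃` on `ℂ³`, evaluated on the triple
of vectors `v 0, v 1, v 2`: the determinant of the complex matrix with columns
`v 0, v 1, v 2`. -/
noncomputable def PhiForm (v : Fin 3 → EuclideanSpace ℂ (Fin 3)) : ℂ :=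
  (Matrix.of fun i j : Fin 3 => v j i).det

/-- The fundamental (Kähler) 2-form `ω(x, y) = Im ⟨x, y⟩` on `ℂ³`. -/
noncomputable def omegaForm (x y : EuclideanSpace ℂ (Fin 3)) : ℝ :=
  (inner ℂ x y : ℂ).im

/-- `(dz_j ∧ ω)(v₁, v₂, v₃) = dz_j(v₁) ω(v₂,v₃) − dz_j(v₂) ω(v₁,v₃) + dz_j(v₃) ω(v₁,v₂)`. -/
noncomputable def dzWedgeOmega (j : Fin 3) (v : Fin 3 → EuclideanSpace ℂ (Fin 3)) : ℂ :=
  v 0 j * (omegaForm (v 1) (v 2) : ℝ)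
    - v 1 j * (omegaForm (v 0) (v 2) : ℝ)
    + v 2 j * (omegaForm (v 0) (v 1) : ℝ)

/-- for all `v₁, v₂, v₃ ∈ ℂ³`,
`|Φ(v₁,v₂,v₃)|² + ∑_j |(dz_j ∧ ω)(v₁,v₂,v₃)|² = det (Re⟨v_i, v_k⟩)_{ik}`. -/
-- small scalar lemma
lemma normSq_comb (x y z : ℂ) (w1 w2 w3 : ℝ) :
    Complex.normSq (x * w1 - y * w2 + z * w3)
      = w1^2 * Complex.normSq x + w2^2 * Complex.normSq y + w3^2 * Complex.normSq z
        - 2 * w1 * w2 * ((starRingEnd ℂ) x * y).re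
        + 2 * w1 * w3 * ((starRingEnd ℂ) x * z).re
        - 2 * w2 * w3 * ((starRingEnd ℂ) y * z).re := by
  simp only [Complex.normSq_apply, Complex.add_re, Complex.add_im, Complex.sub_re,
    Complex.sub_im, Complex.mul_re, Complex.mul_im, Complex.ofReal_re, Complex.ofReal_im,
    Complex.conj_re, Complex.conj_im]
  ring

lemma phi_sq (v : Fin 3 → EuclideanSpace ℂ (Fin 3)) :
    ‖PhiForm v‖^2
      = ((Matrix.of fun i k : Fin 3 => (inner ℂ (v i) (v k) : ℂ)).det).re := by
  have h : (Matrix.of fun i k : Fin 3 => (inner ℂ (v i) (v k) : ℂ))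
      = (Matrix.of fun i j : Fin 3 => v j i).conjTranspose * (Matrix.of fun i j : Fin 3 => v j i) := by
    ext i k
    simp [Matrix.mul_apply, Matrix.conjTranspose_apply, PiLp.inner_apply, RCLike.inner_apply, mul_comm]
  rw [h, Matrix.det_mul, Matrix.det_conjTranspose, ← starRingEnd_apply,
      ← Complex.normSq_eq_conj_mul_self,
      Complex.ofReal_re, ← Complex.sq_norm, PhiForm]

lemma sum_dz_sq (v : Fin 3 → EuclideanSpace ℂ (Fin 3)) :
    ∑ j : Fin 3, ‖dzWedgeOmega j v‖ ^ 2
      = (omegaForm (v 1) (v 2))^2 * (inner ℂ (v 0) (v 0) : ℂ).re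
        + (omegaForm (v 0) (v 2))^2 * (inner ℂ (v 1) (v 1) : ℂ).re
        + (omegaForm (v 0) (v 1))^2 * (inner ℂ (v 2) (v 2) : ℂ).re
        - 2 * omegaForm (v 1) (v 2) * omegaForm (v 0) (v 2) * (inner ℂ (v 0) (v 1) : ℂ).re
        + 2 * omegaForm (v 1) (v 2) * omegaForm (v 0) (v 1) * (inner ℂ (v 0) (v 2) : ℂ).re
        - 2 * omegaForm (v 0) (v 2) * omegaForm (v 0) (v 1) * (inner ℂ (v 1) (v 2) : ℂ).re := by
  simp only [Complex.sq_norm, dzWedgeOmega, Fin.sum_univ_three, normSq_comb]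
  simp only [PiLp.inner_apply, RCLike.inner_apply, Fin.sum_univ_three, Complex.add_re,
    Complex.mul_re, Complex.conj_re, Complex.conj_im, Complex.normSq_apply]
  ring


theorem abs_Phi_sq_add_sum_abs_dz_wedge_omega_sq
    (v : Fin 3 → EuclideanSpace ℂ (Fin 3)) :
    ‖PhiForm v‖ ^ 2
      + ∑ j : Fin 3, ‖dzWedgeOmega j v‖ ^ 2
    = (Matrix.of fun i k : Fin 3 => (inner ℂ (v i) (v k) : ℂ).re).det := by
  rw [phi_sq, sum_dz_sq]
  have hconj : ∀ i k : Fin 3, (inner ℂ (v k) (v i) : ℂ) = (starRingEnd ℂ) (inner ℂ (v i) (v k) : ℂ) :=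
    fun i k => (inner_conj_symm _ _).symm
  have him : ∀ i : Fin 3, (inner ℂ (v i) (v i) : ℂ).im = 0 := fun i => by simpa using inner_self_im (𝕜 := ℂ) (v i)
  simp only [Matrix.det_fin_three, Matrix.of_apply, omegaForm]
  rw [hconj 0 1, hconj 0 2, hconj 1 2]
  simp only [Complex.mul_re, Complex.mul_im, Complex.sub_re, Complex.sub_im,
    Complex.add_re, Complex.add_im, Complex.neg_re, Complex.neg_im,
    Complex.conj_re, Complex.conj_im, him]
  ring
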